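/- Weighted dyadic interpolation inequality for multi-indexed sequences (the interpolation step in the proof of Theorem 5.2): Let q ≥ 1 be an integer and α₀ ≥ 0 a real number. There exists a constant C = C(q) > 0 such that for all real ε > 0 and α with α₀ + 2ε ≤ α < 1, and for every family of nonnegative reals (a_J)_{J ∈ ℕ^q}, one has ∑_{J ∈ ℕ^q} 2^{α₀ σ(J)} a_J ≤ C · ε^{−q/2} · (∑_{J ∈ ℕ^q} 2^{2σ(J)} a_J²)^{α/2} · (∑_{J ∈ ℕ^q} a_J²)^{(1−α)/2}, where σ(J) := j₁ + ⋯ + j_q for J = (j₁,…,j_q). (The inequality is interpreted in the extended nonnegative reals, so it holds trivially when a sum on the right-hand side is infinite.) -/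

import Mathlib

open scoped ENNReal NNReal

open MeasureTheory in
private lemma aux_tsum_mul_le {ι : Type*} [Countable ι] [MeasurableSpace ι]
    [MeasurableSingletonClass ι] (f g : ι → ℝ≥0∞) :
    ∑' i, f i * g i ≤
      (∑' i, f i ^ (2:ℝ)) ^ (1/2 : ℝ) * (∑' i, g i ^ (2:ℝ)) ^ (1/2 : ℝ) := by
  have h := ENNReal.lintegral_mul_le_Lp_mul_Lq (Measure.count : Measure ι)
    (Real.holderConjugate_iff.mpr ⟨one_lt_two, by norm_num⟩ : Real.HolderConjugate 2 2)
    (measurable_of_countable f).aemeasurable (measurable_of_countable g).aemeasurable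
  simpa [MeasureTheory.lintegral_count] using h

open MeasureTheory in
private lemma aux_tsum_rpow_le {ι : Type*} [Countable ι] [MeasurableSpace ι]
    [MeasurableSingletonClass ι] (f g : ι → ℝ≥0∞) {p q : ℝ}
    (hp : 0 ≤ p) (hq : 0 ≤ q) (hpq : p + q = 1) :
    ∑' i, f i ^ p * g i ^ q ≤ (∑' i, f i) ^ p * (∑' i, g i) ^ q := by
  have h := ENNReal.lintegral_mul_norm_pow_le (μ := (Measure.count : Measure ι))
    (measurable_of_countable f).aemeasurable (measurable_of_countable g).aemeasurable hp hq hpq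
  simpa [MeasureTheory.lintegral_count] using h

private lemma aux_tsum_pi (q : ℕ) (f : ℕ → ℝ≥0∞) :
    ∑' J : Fin q → ℕ, ∏ i, f (J i) = (∑' n, f n) ^ q := by
  induction q with
  | zero =>
    simp only [Finset.univ_eq_empty, Finset.prod_empty, pow_zero]
    exact tsum_eq_single (fun i => i.elim0) (fun b' hb' => absurd (Subsingleton.elim b' _) hb')
  | succ q ih =>
    calc ∑' J : Fin (q+1) → ℕ, ∏ i, f (J i)
        = ∑' p : ℕ × (Fin q → ℕ), ∏ i, f ((Fin.consEquiv fun _ => ℕ) p i) :=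
          ((Fin.consEquiv fun _ => ℕ).tsum_eq _).symm
      _ = ∑' p : ℕ × (Fin q → ℕ), f p.1 * ∏ i, f (p.2 i) := by
          refine tsum_congr fun p => ?_
          rw [Fin.prod_univ_succ]
          simp [Fin.consEquiv]
      _ = (∑' n, f n) * ∑' J : Fin q → ℕ, ∏ i, f (J i) := by
          rw [ENNReal.tsum_prod']
          simp_rw [ENNReal.tsum_mul_left]
          rw [ENNReal.tsum_mul_right]
      _ = (∑' n, f n) ^ (q+1) := by rw [ih, pow_succ']

private lemma aux_rpow_sum {ι : Type*} (s : Finset ι) (x : ι → ℝ) :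
    (2:ℝ≥0∞) ^ (∑ i ∈ s, x i) = ∏ i ∈ s, (2:ℝ≥0∞) ^ x i := by
  induction s using Finset.cons_induction with
  | empty => simp
  | cons a s ha ih =>
    rw [Finset.sum_cons, Finset.prod_cons,
      ENNReal.rpow_add _ _ (by norm_num) (by norm_num), ih]

private lemma aux_real (ε : ℝ) (hε : 0 < ε) (hε2 : ε ≤ 1/2) :
    ε/2 ≤ 1 - (2:ℝ) ^ (-(4*ε)) := by
  have hl : (0.6931471803 : ℝ) < Real.log 2 := Real.log_two_gt_d9
  have h1 : (2:ℝ) ^ (-(4*ε)) = Real.exp (Real.log 2 * (-(4*ε))) :=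
    Real.rpow_def_of_pos two_pos _
  have h2 : Real.log 2 * (4*ε) + 1 ≤ Real.exp (Real.log 2 * (4*ε)) := by
    have := Real.add_one_le_exp (Real.log 2 * (4*ε)); linarith
  have h3 : Real.exp (Real.log 2 * (-(4*ε))) = (Real.exp (Real.log 2 * (4*ε)))⁻¹ := by
    rw [← Real.exp_neg]; ring_nf
  have hpos : 0 < Real.log 2 * (4*ε) + 1 := by nlinarith
  have h4 : (Real.exp (Real.log 2 * (4*ε)))⁻¹ ≤ (Real.log 2 * (4*ε) + 1)⁻¹ :=
    inv_anti₀ hpos h2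
  have h5 : (Real.log 2 * (4*ε) + 1)⁻¹ ≤ 1 - ε/2 := by
    rw [inv_eq_one_div, div_le_iff₀ hpos]
    nlinarith [mul_nonneg (mul_nonneg (show (0:ℝ) ≤ Real.log 2 by linarith) hε.le)
        (show (0:ℝ) ≤ 1 - 2*ε by linarith),
      mul_nonneg hε.le (show (0:ℝ) ≤ Real.log 2 - 1/6 by linarith)]
  rw [h1, h3]
  linarith

private lemma aux_geom (c ε : ℝ) (hε : 0 < ε) (hε2 : ε ≤ 1/2) (hc : c ≤ -(4*ε)) :
    ∑' j : ℕ, (2:ℝ≥0∞) ^ (c * (j:ℝ)) ≤ ENNReal.ofReal (2/ε) := by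
  have h1 : ∀ j : ℕ, (2:ℝ≥0∞) ^ (c * (j:ℝ)) = ((2:ℝ≥0∞) ^ c) ^ j := fun j => by
    rw [ENNReal.rpow_mul, ENNReal.rpow_natCast]
  simp_rw [h1]
  rw [ENNReal.tsum_geometric]
  have hs : (2:ℝ≥0∞) ^ c ≤ ENNReal.ofReal ((2:ℝ) ^ (-(4*ε))) := by
    have h0 : (2:ℝ≥0∞) ^ (-(4*ε)) = ENNReal.ofReal ((2:ℝ) ^ (-(4*ε))) := by
      rw [← ENNReal.ofReal_rpow_of_pos two_pos]; norm_num
    rw [← h0]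
    exact ENNReal.rpow_le_rpow_of_exponent_le one_le_two hc
  have hsub : ENNReal.ofReal (ε/2) ≤ 1 - (2:ℝ≥0∞) ^ c := by
    have h6 : (1:ℝ≥0∞) - ENNReal.ofReal ((2:ℝ) ^ (-(4*ε))) ≤ 1 - (2:ℝ≥0∞) ^ c :=
      tsub_le_tsub_left hs 1
    have h7 : (1:ℝ≥0∞) - ENNReal.ofReal ((2:ℝ) ^ (-(4*ε)))
        = ENNReal.ofReal (1 - (2:ℝ) ^ (-(4*ε))) := by
      rw [ENNReal.ofReal_sub _ (by positivity), ENNReal.ofReal_one]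
    refine le_trans ?_ h6
    rw [h7]
    exact ENNReal.ofReal_le_ofReal (aux_real ε hε hε2)
  calc ((1:ℝ≥0∞) - (2:ℝ≥0∞) ^ c)⁻¹ ≤ (ENNReal.ofReal (ε/2))⁻¹ :=
        ENNReal.inv_le_inv' hsub
    _ = ENNReal.ofReal (2/ε) := by
        rw [← ENNReal.ofReal_inv_of_pos (by positivity)]
        norm_num

/-- Weighted dyadic interpolation inequality for multi-indexed sequences: with
`σ(J) = j₁ + ⋯ + j_q`, there is `C = C(q) > 0` such that for all `ε > 0` and
`α₀ + 2ε ≤ α < 1` and every family of nonnegative reals `(a_J)_{J ∈ ℕ^q}`,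
`∑_J 2^{α₀ σ(J)} a_J ≤ C ε^{−q/2} (∑_J 2^{2σ(J)} a_J²)^{α/2} (∑_J a_J²)^{(1−α)/2}`,
interpreted in `[0,∞]`. -/
theorem weighted_dyadic_interpolation (q : ℕ) (hq : 1 ≤ q) (α₀ : ℝ) (hα₀ : 0 ≤ α₀) :
    ∃ C : ℝ, 0 < C ∧
      ∀ (ε α : ℝ), 0 < ε → α₀ + 2 * ε ≤ α → α < 1 →
        ∀ a : (Fin q → ℕ) → ℝ≥0,
          (∑' J : Fin q → ℕ, (2 : ℝ≥0∞) ^ (α₀ * ∑ i : Fin q, (J i : ℝ)) * (a J : ℝ≥0∞))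
            ≤ ENNReal.ofReal (C * ε ^ (-(q : ℝ) / 2))
                * (∑' J : Fin q → ℕ,
                    (2 : ℝ≥0∞) ^ (2 * ∑ i : Fin q, (J i : ℝ)) * (a J : ℝ≥0∞) ^ 2)
                    ^ (α / 2)
                * (∑' J : Fin q → ℕ, (a J : ℝ≥0∞) ^ 2) ^ ((1 - α) / 2) := by
  refine ⟨(2:ℝ) ^ ((q:ℝ)/2), by positivity, ?_⟩
  intro ε α hε hα1 hα2 a
  have hεhalf : ε ≤ 1/2 := by linarith
  have hα0 : 0 < α := by linarith
  have hα1' : 0 < 1 - α := by linarith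
  -- pointwise factorization
  have key : ∀ J : Fin q → ℕ,
      (2:ℝ≥0∞) ^ (α₀ * ∑ i : Fin q, (J i : ℝ)) * (a J : ℝ≥0∞)
      = (2:ℝ≥0∞) ^ ((α₀ - α) * ∑ i : Fin q, (J i : ℝ))
        * (((2:ℝ≥0∞) ^ (2 * ∑ i : Fin q, (J i : ℝ)) * (a J : ℝ≥0∞) ^ 2) ^ (α/2)
            * ((a J : ℝ≥0∞) ^ 2) ^ ((1-α)/2)) := by
    intro J
    have hA2 : ((a J : ℝ≥0∞)) ^ (2:ℕ) = (a J : ℝ≥0∞) ^ ((2:ℕ):ℝ) :=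
      (ENNReal.rpow_natCast _ 2).symm
    have hGα : ((2:ℝ≥0∞) ^ (2 * ∑ i : Fin q, (J i : ℝ)) * (a J : ℝ≥0∞) ^ 2) ^ (α/2)
        = (2:ℝ≥0∞) ^ (α * ∑ i : Fin q, (J i : ℝ)) * (a J : ℝ≥0∞) ^ α := by
      rw [ENNReal.mul_rpow_of_nonneg _ _ (by positivity), hA2,
        ← ENNReal.rpow_mul, ← ENNReal.rpow_mul]
      norm_num
      rw [show 2 * (∑ i : Fin q, (J i : ℝ)) * (α/2) = α * ∑ i : Fin q, (J i : ℝ) by ring,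
        show (2:ℝ) * (α/2) = α by ring]
    have hHα : ((a J : ℝ≥0∞) ^ 2) ^ ((1-α)/2) = (a J : ℝ≥0∞) ^ (1-α) := by
      rw [hA2, ← ENNReal.rpow_mul]
      norm_num
      rw [show (2:ℝ) * ((1-α)/2) = 1 - α by ring]
    rw [hGα, hHα]
    have hmul1 : (2:ℝ≥0∞) ^ ((α₀ - α) * ∑ i : Fin q, (J i : ℝ))
        * (2:ℝ≥0∞) ^ (α * ∑ i : Fin q, (J i : ℝ))
        = (2:ℝ≥0∞) ^ (α₀ * ∑ i : Fin q, (J i : ℝ)) := by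
      rw [← ENNReal.rpow_add _ _ (by norm_num) (by norm_num),
        show (α₀ - α) * (∑ i : Fin q, (J i : ℝ)) + α * ∑ i : Fin q, (J i : ℝ)
          = α₀ * ∑ i : Fin q, (J i : ℝ) by ring]
    have hmul2 : (a J : ℝ≥0∞) ^ α * (a J : ℝ≥0∞) ^ (1-α) = (a J : ℝ≥0∞) := by
      rw [← ENNReal.rpow_add_of_nonneg _ _ hα0.le hα1'.le]
      norm_num
    trans ((2:ℝ≥0∞) ^ ((α₀ - α) * ∑ i : Fin q, (J i : ℝ))
        * (2:ℝ≥0∞) ^ (α * ∑ i : Fin q, (J i : ℝ)))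
        * ((a J : ℝ≥0∞) ^ α * (a J : ℝ≥0∞) ^ (1-α))
    · rw [hmul1, hmul2]
    · ring
  -- the three sums
  have step1 := aux_tsum_mul_le
    (fun J : Fin q → ℕ => (2:ℝ≥0∞) ^ ((α₀ - α) * ∑ i : Fin q, (J i : ℝ)))
    (fun J : Fin q → ℕ =>
      ((2:ℝ≥0∞) ^ (2 * ∑ i : Fin q, (J i : ℝ)) * (a J : ℝ≥0∞) ^ 2) ^ (α/2)
        * ((a J : ℝ≥0∞) ^ 2) ^ ((1-α)/2))
  -- bound on the weight factor
  have hc : 2 * (α₀ - α) ≤ -(4*ε) := by linarith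
  have step3 : (∑' J : Fin q → ℕ,
        ((2:ℝ≥0∞) ^ ((α₀ - α) * ∑ i : Fin q, (J i : ℝ))) ^ (2:ℝ)) ^ (1/2:ℝ)
      ≤ ENNReal.ofReal ((2:ℝ) ^ ((q:ℝ)/2) * ε ^ (-(q:ℝ)/2)) := by
    have hFsq : ∀ J : Fin q → ℕ,
        ((2:ℝ≥0∞) ^ ((α₀ - α) * ∑ i : Fin q, (J i : ℝ))) ^ (2:ℝ)
        = ∏ i : Fin q, (2:ℝ≥0∞) ^ ((2*(α₀-α)) * ((J i : ℕ) : ℝ)) := fun J => by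
      rw [← ENNReal.rpow_mul, ← aux_rpow_sum]
      congr 1
      rw [show (α₀ - α) * (∑ i : Fin q, (J i : ℝ)) * 2
          = (2*(α₀-α)) * ∑ i : Fin q, (J i : ℝ) by ring, Finset.mul_sum]
    have hW : (∑' J : Fin q → ℕ,
          ((2:ℝ≥0∞) ^ ((α₀ - α) * ∑ i : Fin q, (J i : ℝ))) ^ (2:ℝ))
        = (∑' n : ℕ, (2:ℝ≥0∞) ^ ((2*(α₀-α)) * (n:ℝ))) ^ q := by
      rw [tsum_congr hFsq, aux_tsum_pi q (fun n => (2:ℝ≥0∞) ^ ((2*(α₀-α)) * (n:ℝ)))]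
    have hgeom : ∑' n : ℕ, (2:ℝ≥0∞) ^ ((2*(α₀-α)) * (n:ℝ)) ≤ ENNReal.ofReal (2/ε) :=
      aux_geom _ ε hε hεhalf hc
    calc (∑' J : Fin q → ℕ,
          ((2:ℝ≥0∞) ^ ((α₀ - α) * ∑ i : Fin q, (J i : ℝ))) ^ (2:ℝ)) ^ (1/2:ℝ)
        = ((∑' n : ℕ, (2:ℝ≥0∞) ^ ((2*(α₀-α)) * (n:ℝ))) ^ q) ^ (1/2:ℝ) := by rw [hW]
      _ ≤ ((ENNReal.ofReal (2/ε)) ^ q) ^ (1/2:ℝ) :=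
          ENNReal.rpow_le_rpow (pow_le_pow_left' hgeom q) (by norm_num)
      _ = ENNReal.ofReal ((2:ℝ) ^ ((q:ℝ)/2) * ε ^ (-(q:ℝ)/2)) := by
          rw [← ENNReal.rpow_natCast (ENNReal.ofReal (2/ε)) q, ← ENNReal.rpow_mul,
            ENNReal.ofReal_rpow_of_pos (by positivity)]
          congr 1
          rw [show (q:ℝ) * (1/2) = (q:ℝ)/2 by ring,
            Real.div_rpow (by norm_num : (0:ℝ) ≤ 2) hε.le, div_eq_mul_inv,
            ← Real.rpow_neg hε.le, show -((q:ℝ)/2) = -(q:ℝ)/2 by ring]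
  -- Hölder on the second factor
  have sq : ∀ J : Fin q → ℕ,
      (((2:ℝ≥0∞) ^ (2 * ∑ i : Fin q, (J i : ℝ)) * (a J : ℝ≥0∞) ^ 2) ^ (α/2)
        * ((a J : ℝ≥0∞) ^ 2) ^ ((1-α)/2)) ^ (2:ℝ)
      = ((2:ℝ≥0∞) ^ (2 * ∑ i : Fin q, (J i : ℝ)) * (a J : ℝ≥0∞) ^ 2) ^ α
        * ((a J : ℝ≥0∞) ^ 2) ^ (1-α) := fun J => by
    rw [ENNReal.mul_rpow_of_nonneg _ _ (by norm_num : (0:ℝ) ≤ 2),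
      ← ENNReal.rpow_mul, ← ENNReal.rpow_mul,
      div_mul_cancel₀ _ (by norm_num : (2:ℝ) ≠ 0),
      div_mul_cancel₀ _ (by norm_num : (2:ℝ) ≠ 0)]
  have step2' : (∑' J : Fin q → ℕ,
        (((2:ℝ≥0∞) ^ (2 * ∑ i : Fin q, (J i : ℝ)) * (a J : ℝ≥0∞) ^ 2) ^ (α/2)
          * ((a J : ℝ≥0∞) ^ 2) ^ ((1-α)/2)) ^ (2:ℝ)) ^ (1/2:ℝ)
      ≤ (∑' J : Fin q → ℕ, (2:ℝ≥0∞) ^ (2 * ∑ i : Fin q, (J i : ℝ)) * (a J : ℝ≥0∞) ^ 2) ^ (α/2)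
        * (∑' J : Fin q → ℕ, (a J : ℝ≥0∞) ^ 2) ^ ((1-α)/2) := by
    calc (∑' J : Fin q → ℕ,
          (((2:ℝ≥0∞) ^ (2 * ∑ i : Fin q, (J i : ℝ)) * (a J : ℝ≥0∞) ^ 2) ^ (α/2)
            * ((a J : ℝ≥0∞) ^ 2) ^ ((1-α)/2)) ^ (2:ℝ)) ^ (1/2:ℝ)
        = (∑' J : Fin q → ℕ,
            ((2:ℝ≥0∞) ^ (2 * ∑ i : Fin q, (J i : ℝ)) * (a J : ℝ≥0∞) ^ 2) ^ α
              * ((a J : ℝ≥0∞) ^ 2) ^ (1-α)) ^ (1/2:ℝ) := by rw [tsum_congr sq]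
      _ ≤ ((∑' J : Fin q → ℕ, (2:ℝ≥0∞) ^ (2 * ∑ i : Fin q, (J i : ℝ)) * (a J : ℝ≥0∞) ^ 2) ^ α
            * (∑' J : Fin q → ℕ, (a J : ℝ≥0∞) ^ 2) ^ (1-α)) ^ (1/2:ℝ) :=
          ENNReal.rpow_le_rpow
            (aux_tsum_rpow_le _ _ hα0.le hα1'.le (by ring)) (by norm_num)
      _ = _ := by
          rw [ENNReal.mul_rpow_of_nonneg _ _ (by norm_num : (0:ℝ) ≤ 1/2),
            ← ENNReal.rpow_mul, ← ENNReal.rpow_mul,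
            show α * (1/2:ℝ) = α/2 by ring, show (1-α) * (1/2:ℝ) = (1-α)/2 by ring]
  calc (∑' J : Fin q → ℕ, (2 : ℝ≥0∞) ^ (α₀ * ∑ i : Fin q, (J i : ℝ)) * (a J : ℝ≥0∞))
      = ∑' J : Fin q → ℕ,
          (2:ℝ≥0∞) ^ ((α₀ - α) * ∑ i : Fin q, (J i : ℝ))
          * (((2:ℝ≥0∞) ^ (2 * ∑ i : Fin q, (J i : ℝ)) * (a J : ℝ≥0∞) ^ 2) ^ (α/2)
              * ((a J : ℝ≥0∞) ^ 2) ^ ((1-α)/2)) := tsum_congr key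
    _ ≤ (∑' J : Fin q → ℕ,
          ((2:ℝ≥0∞) ^ ((α₀ - α) * ∑ i : Fin q, (J i : ℝ))) ^ (2:ℝ)) ^ (1/2:ℝ)
        * (∑' J : Fin q → ℕ,
            (((2:ℝ≥0∞) ^ (2 * ∑ i : Fin q, (J i : ℝ)) * (a J : ℝ≥0∞) ^ 2) ^ (α/2)
              * ((a J : ℝ≥0∞) ^ 2) ^ ((1-α)/2)) ^ (2:ℝ)) ^ (1/2:ℝ) := step1
    _ ≤ ENNReal.ofReal ((2:ℝ) ^ ((q:ℝ)/2) * ε ^ (-(q:ℝ)/2))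
        * ((∑' J : Fin q → ℕ, (2:ℝ≥0∞) ^ (2 * ∑ i : Fin q, (J i : ℝ)) * (a J : ℝ≥0∞) ^ 2) ^ (α/2)
          * (∑' J : Fin q → ℕ, (a J : ℝ≥0∞) ^ 2) ^ ((1-α)/2)) :=
        mul_le_mul' step3 step2'
    _ = _ := by rw [mul_assoc]
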